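/- Let u be a real-valued function harmonic on an open disk D ⊂ ℂ and continuous up to a boundary point z₀ ∈ ∂D, with u(z₀) > u(ζ) for all ζ ∈ D. If u is differentiable at z₀ (as a function on a neighborhood of the closed disk), then the inner normal derivative of u at z₀ is strictly negative; in particular ∇u(z₀) ≠ 0. -/

import Mathlib

open Complex MeasureTheory Metric Filter
open scoped Real Topology

/-- Laplacian of a real-valued function on the plane. -/
noncomputable def lapR (u : ℂ → ℝ) (z : ℂ) : ℝ :=
  fderiv ℝ (fun w => fderiv ℝ u w 1) z 1 + fderiv ℝ (fun w => fderiv ℝ u w Complex.I) z Complex.I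

noncomputable def gbar (α a b : ℝ) : ℂ → ℝ :=
  fun z => Real.exp (-α * ((z.re - a) ^ 2 + (z.im - b) ^ 2))

noncomputable def gbar' (α a b : ℝ) (z : ℂ) : ℂ →L[ℝ] ℝ :=
  (gbar α a b z * (-2 * α)) • (((z.re - a) • Complex.reCLM) + ((z.im - b) • Complex.imCLM))

lemma gbar_hasFDerivAt (α a b : ℝ) (z : ℂ) :
    HasFDerivAt (gbar α a b) (gbar' α a b z) z := by
  have hre : HasFDerivAt (fun w : ℂ => w.re - a) (Complex.reCLM : ℂ →L[ℝ] ℝ) z :=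
    Complex.reCLM.hasFDerivAt.sub_const a
  have him : HasFDerivAt (fun w : ℂ => w.im - b) (Complex.imCLM : ℂ →L[ℝ] ℝ) z :=
    Complex.imCLM.hasFDerivAt.sub_const b
  have h1 : HasFDerivAt (fun w : ℂ => (w.re - a) ^ 2)
      ((z.re - a) • (Complex.reCLM : ℂ →L[ℝ] ℝ) + (z.re - a) • (Complex.reCLM : ℂ →L[ℝ] ℝ)) z := by
    have := hre.fun_mul hre
    simpa [sq] using this
  have h2 : HasFDerivAt (fun w : ℂ => (w.im - b) ^ 2)
      ((z.im - b) • (Complex.imCLM : ℂ →L[ℝ] ℝ) + (z.im - b) • (Complex.imCLM : ℂ →L[ℝ] ℝ)) z := by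
    have := him.fun_mul him
    simpa [sq] using this
  have h3 := ((h1.fun_add h2).const_mul (-α)).exp
  refine h3.congr_fderiv ?_
  ext v
  simp [gbar', gbar]
  ring

lemma gbar_fderiv (α a b : ℝ) (z : ℂ) (v : ℂ) :
    fderiv ℝ (gbar α a b) z v
      = gbar α a b z * (-2 * α * ((z.re - a) * v.re + (z.im - b) * v.im)) := by
  rw [(gbar_hasFDerivAt α a b z).fderiv]
  simp [gbar']
  ring

lemma gbar_contDiff (α a b : ℝ) : ContDiff ℝ 2 (gbar α a b) := by
  have h : ContDiff ℝ 2 (fun z : ℂ => -α * ((z.re - a) ^ 2 + (z.im - b) ^ 2)) :=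
    contDiff_const.mul (((Complex.reCLM.contDiff.sub contDiff_const).pow 2).add
      ((Complex.imCLM.contDiff.sub contDiff_const).pow 2))
  exact h.exp


lemma lapR_gbar (α a b : ℝ) (z : ℂ) :
    lapR (gbar α a b) z
      = gbar α a b z * (4 * α ^ 2 * ((z.re - a) ^ 2 + (z.im - b) ^ 2) - 4 * α) := by
  have hfun1 : (fun w => fderiv ℝ (gbar α a b) w 1)
      = fun w => gbar α a b w * (-2 * α * (w.re - a)) := by
    funext w; rw [gbar_fderiv]; simp
  have hfunI : (fun w => fderiv ℝ (gbar α a b) w Complex.I)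
      = fun w => gbar α a b w * (-2 * α * (w.im - b)) := by
    funext w; rw [gbar_fderiv]; simp
  have hq1 : HasFDerivAt (fun w : ℂ => -2 * α * (w.re - a))
      ((-2 * α) • (Complex.reCLM : ℂ →L[ℝ] ℝ)) z :=
    HasFDerivAt.const_mul (Complex.reCLM.hasFDerivAt.sub_const a) (-2 * α)
  have hqI : HasFDerivAt (fun w : ℂ => -2 * α * (w.im - b))
      ((-2 * α) • (Complex.imCLM : ℂ →L[ℝ] ℝ)) z :=
    HasFDerivAt.const_mul (Complex.imCLM.hasFDerivAt.sub_const b) (-2 * α)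
  have h1 := (gbar_hasFDerivAt α a b z).fun_mul hq1
  have hI := (gbar_hasFDerivAt α a b z).fun_mul hqI
  rw [lapR, hfun1, hfunI, h1.fderiv, hI.fderiv]
  simp [gbar']
  ring

lemma second_deriv_nonpos_at_max {φ : ℝ → ℝ} {L : ℝ}
    (hφ : ∀ᶠ t in 𝓝 (0 : ℝ), DifferentiableAt ℝ φ t)
    (hmax : IsLocalMax φ 0) (hL : HasDerivAt (deriv φ) L 0) : L ≤ 0 := by
  by_contra hpos
  push_neg at hpos
  have h0 : deriv φ 0 = 0 := hmax.deriv_eq_zero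
  have hslope : Tendsto (slope (deriv φ) 0) (𝓝[≠] 0) (𝓝 L) :=
    hasDerivAt_iff_tendsto_slope.mp hL
  have hev : ∀ᶠ t in 𝓝[≠] (0 : ℝ), 0 < slope (deriv φ) 0 t :=
    hslope.eventually (eventually_gt_nhds hpos)
  have hgt : ∀ᶠ t in 𝓝[>] (0 : ℝ), 0 < deriv φ t := by
    have h' := hev.filter_mono (nhdsWithin_mono 0 (fun t ht => ne_of_gt ht))
    filter_upwards [h', self_mem_nhdsWithin] with t hst ht
    have : slope (deriv φ) 0 t = deriv φ t / t := by
      simp [slope_def_field, h0]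
    rw [this] at hst
    have := mul_pos hst ht
    rwa [div_mul_cancel₀] at this
    exact ne_of_gt ht
  obtain ⟨ε₁, hε₁, H₁⟩ := Metric.eventually_nhds_iff.mp (hφ.and hmax)
  obtain ⟨ε₂, hε₂, H₂⟩ := Metric.mem_nhdsWithin_iff.mp hgt
  set d : ℝ := min ε₁ ε₂ / 2 with hd
  have hd0 : 0 < d := by positivity
  have hdlt1 : d < ε₁ := lt_of_lt_of_le (by linarith [min_le_left ε₁ ε₂]) le_rfl
  have hdlt2 : d < ε₂ := lt_of_lt_of_le (by linarith [min_le_right ε₁ ε₂]) le_rfl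
  have hmono : StrictMonoOn φ (Set.Icc 0 d) := by
    apply strictMonoOn_of_deriv_pos (convex_Icc 0 d)
    · intro t ht
      have : dist t 0 < ε₁ := by
        rw [Real.dist_eq, sub_zero, _root_.abs_of_nonneg ht.1]; linarith [ht.2]
      exact ((H₁ this).1).continuousAt.continuousWithinAt
    · intro t ht
      rw [interior_Icc] at ht
      apply H₂
      constructor
      · rw [mem_ball, Real.dist_eq, sub_zero, _root_.abs_of_pos ht.1]; linarith [ht.2]
      · exact ht.1
  have h1 : φ 0 < φ d := hmono (Set.left_mem_Icc.mpr hd0.le) (Set.right_mem_Icc.mpr hd0.le) hd0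
  have h2 : φ d ≤ φ 0 := by
    have : dist d 0 < ε₁ := by rw [Real.dist_eq, sub_zero, _root_.abs_of_pos hd0]; exact hdlt1
    exact (H₁ this).2
  linarith

lemma fderiv_apply_diffAt {f : ℂ → ℝ} {s : Set ℂ} (hs : IsOpen s)
    (hf : ContDiffOn ℝ 2 f s) {x : ℂ} (hx : x ∈ s) (v : ℂ) :
    DifferentiableAt ℝ (fun y => fderiv ℝ f y v) x := by
  have h2 : ContDiffAt ℝ 2 f x := (hf x hx).contDiffAt (hs.mem_nhds hx)
  have h1 : ContDiffAt ℝ 1 (fderiv ℝ f) x := h2.fderiv_right (by norm_num)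
  exact (h1.differentiableAt (by norm_num)).clm_apply (differentiableAt_const v)

lemma dir2_nonpos {f : ℂ → ℝ} {s : Set ℂ} (hs : IsOpen s) (hf : ContDiffOn ℝ 2 f s)
    {x : ℂ} (hx : x ∈ s) (hmax : IsLocalMax f x) (v : ℂ) :
    fderiv ℝ (fun y => fderiv ℝ f y v) x v ≤ 0 := by
  set φ : ℝ → ℝ := fun t => f (x + t • v) with hφdef
  have hline : ∀ t : ℝ, HasDerivAt (fun s : ℝ => x + s • v) v t := fun t => by
    simpa using ((hasDerivAt_id t).smul_const v).const_add x
  have hcont : Tendsto (fun t : ℝ => x + t • v) (𝓝 0) (𝓝 x) := by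
    have h := (hline 0).continuousAt
    unfold ContinuousAt at h
    simpa using h
  have hmem : ∀ᶠ t : ℝ in 𝓝 0, x + t • v ∈ s := hcont.eventually (hs.eventually_mem hx)
  have hder : ∀ᶠ t : ℝ in 𝓝 0, HasDerivAt φ (fderiv ℝ f (x + t • v) v) t := by
    filter_upwards [hmem] with t ht
    have hdiff : DifferentiableAt ℝ f (x + t • v) :=
      ((hf _ ht).contDiffAt (hs.mem_nhds ht)).differentiableAt (by norm_num)
    exact hdiff.hasFDerivAt.comp_hasDerivAt t (hline t)
  have hφdiff : ∀ᶠ t in 𝓝 (0 : ℝ), DifferentiableAt ℝ φ t :=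
    hder.mono fun t ht => ht.differentiableAt
  have hφderiv : ∀ᶠ t in 𝓝 (0 : ℝ), deriv φ t = fderiv ℝ f (x + t • v) v :=
    hder.mono fun t ht => ht.deriv
  have hmaxφ : IsLocalMax φ 0 := by
    have := hcont.eventually hmax
    refine this.mono fun t ht => ?_
    simpa [hφdef] using ht
  have hgdiff : DifferentiableAt ℝ (fun y => fderiv ℝ f y v) x :=
    fderiv_apply_diffAt hs hf hx v
  have hψ : HasDerivAt (fun t : ℝ => fderiv ℝ f (x + t • v) v)
      (fderiv ℝ (fun y => fderiv ℝ f y v) x v) 0 := by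
    have h := hgdiff.hasFDerivAt
    rw [show x = x + (0 : ℝ) • v by simp] at h
    have := h.comp_hasDerivAt 0 (hline 0)
    simpa [Function.comp_def] using this
  have hL : HasDerivAt (deriv φ) (fderiv ℝ (fun y => fderiv ℝ f y v) x v) 0 := by
    apply hψ.congr_of_eventuallyEq
    exact hφderiv
  exact second_deriv_nonpos_at_max hφdiff hmaxφ hL

lemma lapR_add_gbar {u : ℂ → ℝ} {s : Set ℂ} (hs : IsOpen s) (hu : ContDiffOn ℝ 2 u s)
    {x : ℂ} (hx : x ∈ s) (ε α a b : ℝ) :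
    lapR (fun z => u z + ε * gbar α a b z) x = lapR u x + ε * lapR (gbar α a b) x := by
  have hgC : ContDiffOn ℝ 2 (gbar α a b) s := (gbar_contDiff α a b).contDiffOn
  have key : ∀ v : ℂ,
      fderiv ℝ (fun y => fderiv ℝ (fun z => u z + ε * gbar α a b z) y v) x v
        = fderiv ℝ (fun y => fderiv ℝ u y v) x v
          + ε * fderiv ℝ (fun y => fderiv ℝ (gbar α a b) y v) x v := by
    intro v
    have he : (fun y => fderiv ℝ (fun z => u z + ε * gbar α a b z) y v)
        =ᶠ[𝓝 x] fun y => fderiv ℝ u y v + ε * fderiv ℝ (gbar α a b) y v := by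
      filter_upwards [hs.eventually_mem hx] with y hy
      have h1 : DifferentiableAt ℝ u y :=
        ((hu y hy).contDiffAt (hs.mem_nhds hy)).differentiableAt (by norm_num)
      have h2 : DifferentiableAt ℝ (gbar α a b) y :=
        ((gbar_contDiff α a b).differentiable (by norm_num)) y
      rw [fderiv_fun_add h1 (h2.const_mul ε), fderiv_const_mul h2 ε]
      simp
    rw [he.fderiv_eq]
    have hA := fderiv_apply_diffAt hs hu hx v
    have hB := fderiv_apply_diffAt hs hgC hx v
    rw [fderiv_fun_add hA (hB.const_mul ε), fderiv_const_mul hB ε]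
    simp
  rw [lapR, lapR, lapR, key 1, key Complex.I]; ring

lemma tangent_ball {c z₀ : ℂ} {r : ℝ} (hr : 0 < r) (hz : dist z₀ c = r) {x : ℂ}
    (hx : dist x ((c + z₀) / 2) ≤ r / 2) : x ∈ Metric.ball c r ∨ x = z₀ := by
  set c' : ℂ := (c + z₀) / 2 with hc'def
  have hc' : dist c' c = r / 2 := by
    have h1 : c' - c = (z₀ - c) / 2 := by rw [hc'def]; ring
    rw [dist_eq_norm, h1, norm_div]
    rw [dist_eq_norm] at hz
    rw [hz]
    norm_num
  by_cases hlt : dist x c < r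
  · exact Or.inl (mem_ball.mpr hlt)
  right
  have htri := dist_triangle x c' c
  have heq : dist x c = r := le_antisymm (by linarith) (not_lt.mp hlt)
  have htri2 := dist_triangle x c c'
  have hsym := dist_comm c c'
  have hx2 : dist x c' = r / 2 := by linarith
  have hray : SameRay ℝ (x - c') (c' - c) := by
    rw [sameRay_iff_norm_add]
    have h2 : x - c' + (c' - c) = x - c := by ring
    rw [h2, ← dist_eq_norm, ← dist_eq_norm, ← dist_eq_norm, heq, hx2, hc']
    ring
  have hh := hray.eq_of_norm_eq (by rw [← dist_eq_norm, ← dist_eq_norm, hx2, hc'])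
  have hx3 : x = 2 * c' - c := by
    have : x - c' - (c' - c) = 0 := by rw [hh]; ring
    have h4 : x - (2 * c' - c) = 0 := by linear_combination this
    linear_combination h4
  rw [hx3, hc'def]; ring

set_option maxHeartbeats 2000000 in
theorem stmt18 (c : ℂ) (r : ℝ) (hr : 0 < r) (u : ℂ → ℝ) (z₀ : ℂ)
    (hz₀ : z₀ ∈ Metric.sphere c r)
    (hsm : ContDiffOn ℝ 2 u (Metric.ball c r))
    (hharm : ∀ z ∈ Metric.ball c r, lapR u z = 0)
    (hcont : ContinuousWithinAt u (Metric.ball c r) z₀)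
    (hmax : ∀ ζ ∈ Metric.ball c r, u ζ < u z₀)
    (hdiff : DifferentiableAt ℝ u z₀) :
    fderiv ℝ u z₀ (c - z₀) < 0 ∧ fderiv ℝ u z₀ ≠ 0 := by
  have hz : dist z₀ c = r := mem_sphere.mp hz₀
  set c' : ℂ := (c + z₀) / 2 with hc'def
  set a : ℝ := c'.re with hadef
  set b : ℝ := c'.im with hbdef
  set ρ : ℝ := r / 2 with hρdef
  have hρ0 : 0 < ρ := by rw [hρdef]; positivity
  set α : ℝ := 32 / r ^ 2 with hαdef
  have hα0 : 0 < α := by rw [hαdef]; positivity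
  set v : ℂ := c - z₀ with hvdef
  have hv : ‖v‖ = r := by rw [hvdef, ← dist_eq_norm, dist_comm]; exact hz
  have hvsq : v.re ^ 2 + v.im ^ 2 = r ^ 2 := by
    have h1 : Complex.normSq v = ‖v‖ ^ 2 := (Complex.sq_norm v).symm
    rw [Complex.normSq_apply] at h1
    rw [hv] at h1
    nlinarith [h1]
  have hdist_val : ∀ z : ℂ, (z.re - a) ^ 2 + (z.im - b) ^ 2 = dist z c' ^ 2 := by
    intro z
    rw [Complex.dist_eq, Complex.sq_norm, Complex.normSq_apply, Complex.sub_re,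
      Complex.sub_im]
    ring
  have hgval : ∀ z : ℂ, gbar α a b z = Real.exp (-α * dist z c' ^ 2) := by
    intro z; rw [gbar, hdist_val]
  have hvc : z₀ - c' = (-(2⁻¹ : ℝ)) • v := by
    rw [hc'def, hvdef, Complex.real_smul]
    push_cast
    ring
  have hdistz₀ : dist z₀ c' = ρ := by
    rw [dist_eq_norm, hvc, norm_smul, Real.norm_eq_abs, hv, hρdef]
    rw [abs_of_nonpos (by norm_num)]
    ring
  have hdc'c : dist c' c = ρ := by
    rw [dist_eq_norm]
    have h1 : c' - c = (-(2⁻¹) : ℝ) • v := by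
      rw [hc'def, hvdef, Complex.real_smul]; push_cast; ring
    rw [h1, norm_smul, Real.norm_eq_abs, hv, hρdef, abs_of_nonpos (by norm_num)]
    ring
  set E₀ : ℝ := Real.exp (-α * ρ ^ 2) with hE₀def
  set E₁ : ℝ := Real.exp (-α * (ρ / 2) ^ 2) with hE₁def
  have hE : E₀ < E₁ := by
    rw [hE₀def, hE₁def]
    apply Real.exp_lt_exp.mpr
    have h : 0 < α * ρ ^ 2 := by positivity
    nlinarith [h]
  -- interior continuity / differentiability of u
  have huCA : ∀ y ∈ Metric.ball c r, ContinuousAt u y := fun y hy =>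
    (((hsm y hy).contDiffAt (isOpen_ball.mem_nhds hy)).differentiableAt
      (by norm_num)).continuousAt
  -- inner sphere max
  have hSball : Metric.sphere c' (ρ / 2) ⊆ Metric.ball c r := by
    intro x hx
    have h1 : dist x c' = ρ / 2 := mem_sphere.mp hx
    have h2 := dist_triangle x c' c
    rw [mem_ball]
    rw [h1, hdc'c] at h2
    have : ρ + ρ = r := by rw [hρdef]; ring
    linarith
  obtain ⟨x₁, hx₁S, hx₁max⟩ := (isCompact_sphere c' (ρ / 2)).exists_isMaxOn
    (NormedSpace.sphere_nonempty.mpr (by positivity)) (hsm.continuousOn.mono hSball)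
  set δ : ℝ := u z₀ - u x₁ with hδdef
  have hδ0 : 0 < δ := sub_pos.mpr (hmax x₁ (hSball hx₁S))
  set ε : ℝ := δ / (E₁ - E₀) with hεdef
  have hε0 : 0 < ε := div_pos hδ0 (sub_pos.mpr hE)
  have hεδ : ε * (E₁ - E₀) = δ := div_mul_cancel₀ δ (ne_of_gt (sub_pos.mpr hE))
  set w : ℂ → ℝ := fun z => u z + ε * gbar α a b z with hwdef
  -- the closed annulus
  set K : Set ℂ := Metric.closedBall c' ρ \ Metric.ball c' (ρ / 2) with hKdef
  have hKsub : ∀ x ∈ K, x ∈ Metric.ball c r ∨ x = z₀ := by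
    intro x hx
    have h1 : dist x c' ≤ ρ := mem_closedBall.mp hx.1
    exact tangent_ball hr hz (by rw [hρdef] at h1; exact h1)
  have hz₀K : z₀ ∈ K := by
    constructor
    · exact mem_closedBall.mpr (le_of_eq hdistz₀)
    · intro hmem
      rw [mem_ball, hdistz₀] at hmem
      linarith
  have hucontK : ContinuousOn u K := by
    intro y hy
    rcases hKsub y hy with hyb | rfl
    · exact (huCA y hyb).continuousWithinAt
    · apply ContinuousWithinAt.mono (hcont.insert)
      intro p hp
      rcases hKsub p hp with h | h
      · exact Set.mem_insert_of_mem _ h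
      · rw [h]; exact Set.mem_insert _ _
  have hwcont : ContinuousOn w K :=
    hucontK.add ((continuous_const.mul (gbar_contDiff α a b).continuous).continuousOn)
  have hKcomp : IsCompact K := (isCompact_closedBall c' ρ).diff isOpen_ball
  obtain ⟨x₀, hx₀K, hx₀max⟩ := hKcomp.exists_isMaxOn ⟨z₀, hz₀K⟩ hwcont
  -- the max value is at most u z₀ + ε * E₀
  have hbound : w x₀ ≤ u z₀ + ε * E₀ := by
    have h1 : ρ / 2 ≤ dist x₀ c' := by
      by_contra h
      exact hx₀K.2 (mem_ball.mpr (not_le.mp h))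
    have h2 : dist x₀ c' ≤ ρ := mem_closedBall.mp hx₀K.1
    rcases eq_or_lt_of_le h2 with houter | hlt2
    · -- on the outer sphere
      have hg : gbar α a b x₀ = E₀ := by rw [hgval, houter]
      have hu : u x₀ ≤ u z₀ := by
        rcases hKsub x₀ hx₀K with h | h
        · exact (hmax x₀ h).le
        · rw [h]
      rw [hwdef]; simp only []
      rw [hg]
      linarith
    rcases eq_or_lt_of_le h1 with hinner | hgt
    · -- on the inner sphere
      have hx₀S : x₀ ∈ Metric.sphere c' (ρ / 2) := mem_sphere.mpr hinner.symm
      have hg : gbar α a b x₀ = E₁ := by rw [hgval, ← hinner]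
      have hu : u x₀ ≤ u x₁ := hx₁max hx₀S
      rw [hwdef]; simp only []
      rw [hg]
      have : u x₁ = u z₀ - δ := by rw [hδdef]; ring
      nlinarith [hεδ]
    · -- interior: contradiction with the maximum principle
      exfalso
      set A : Set ℂ := Metric.ball c' ρ \ Metric.closedBall c' (ρ / 2) with hAdef
      have hAopen : IsOpen A := isOpen_ball.sdiff Metric.isClosed_closedBall
      have hx₀A : x₀ ∈ A := by
        constructor
        · exact mem_ball.mpr hlt2
        · intro hc
          exact absurd (mem_closedBall.mp hc) (not_le.mpr hgt)
      have hAK : A ⊆ K := fun y hy =>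
        ⟨ball_subset_closedBall hy.1, fun hb => hy.2 (ball_subset_closedBall hb)⟩
      have hAball : A ⊆ Metric.ball c r := by
        intro y hy
        have h3 := mem_ball.mp hy.1
        have h4 := dist_triangle y c' c
        rw [mem_ball]
        rw [hdc'c] at h4
        have : ρ + ρ = r := by rw [hρdef]; ring
        linarith
      have hx₀ball : x₀ ∈ Metric.ball c r := hAball hx₀A
      have hlocmax : IsLocalMax w x₀ := by
        filter_upwards [hAopen.eventually_mem hx₀A] with y hy
        exact hx₀max (hAK hy)
      have hwC : ContDiffOn ℝ 2 w (Metric.ball c r) :=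
        hsm.add ((contDiff_const.mul (gbar_contDiff α a b)).contDiffOn)
      have hle : lapR w x₀ ≤ 0 :=
        add_nonpos (dir2_nonpos isOpen_ball hwC hx₀ball hlocmax 1)
          (dir2_nonpos isOpen_ball hwC hx₀ball hlocmax Complex.I)
      have heq : lapR w x₀ = lapR u x₀ + ε * lapR (gbar α a b) x₀ :=
        lapR_add_gbar isOpen_ball hsm hx₀ball ε α a b
      rw [hharm x₀ hx₀ball, lapR_gbar] at heq
      have hs : (x₀.re - a) ^ 2 + (x₀.im - b) ^ 2 = dist x₀ c' ^ 2 := hdist_val x₀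
      have hs2 : (ρ / 2) ^ 2 ≤ dist x₀ c' ^ 2 := by nlinarith [hgt, hρ0]
      have hαs : 2 ≤ α * ((x₀.re - a) ^ 2 + (x₀.im - b) ^ 2) := by
        rw [hs]
        rw [hρdef] at hs2
        have hr2 : (0:ℝ) < r ^ 2 := by positivity
        rw [hαdef, div_mul_eq_mul_div, le_div_iff₀ hr2]
        nlinarith [hs2]
      have hgp : 0 < gbar α a b x₀ := Real.exp_pos _
      have hX : 4 * α ≤ 4 * α ^ 2 * ((x₀.re - a) ^ 2 + (x₀.im - b) ^ 2) - 4 * α := by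
        nlinarith [mul_le_mul_of_nonneg_left hαs hα0.le]
      have hpos : 0 < ε * (gbar α a b x₀
          * (4 * α ^ 2 * ((x₀.re - a) ^ 2 + (x₀.im - b) ^ 2) - 4 * α)) := by
        apply mul_pos hε0
        apply mul_pos hgp
        linarith [hα0]
      rw [heq] at hle
      linarith
  -- the ray into the annulus
  have hline : ∀ t : ℝ, HasDerivAt (fun s : ℝ => z₀ + s • v) v t := fun t => by
    simpa using ((hasDerivAt_id t).smul_const v).const_add z₀
  set φ : ℝ → ℝ := fun t => w (z₀ + t • v) with hφdef
  have hφ0 : φ 0 = u z₀ + ε * E₀ := by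
    rw [hφdef]
    simp only [zero_smul, add_zero]
    rw [hwdef]
    simp only []
    rw [hgval z₀, hdistz₀]
  have hKt : ∀ t ∈ Set.Icc (0 : ℝ) (1/4), z₀ + t • v ∈ K := by
    intro t ht
    have hzt : z₀ + t • v - c' = ((t - 2⁻¹ : ℝ)) • v := by
      rw [add_sub_right_comm, hvc, ← add_smul]
      congr 1
      ring
    have hdt : dist (z₀ + t • v) c' = (2⁻¹ - t) * r := by
      rw [dist_eq_norm, hzt, norm_smul, Real.norm_eq_abs, hv,
        abs_of_nonpos (by linarith [ht.2])]
      ring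
    constructor
    · rw [mem_closedBall, hdt, hρdef]
      nlinarith [ht.1, hr]
    · intro hmem
      rw [mem_ball, hdt, hρdef] at hmem
      nlinarith [ht.2, hr]
  have hφle : ∀ t ∈ Set.Ioo (0 : ℝ) (1/4), φ t ≤ φ 0 := by
    intro t ht
    rw [hφ0]
    exact le_trans (hx₀max (hKt t ⟨ht.1.le, ht.2.le⟩)) hbound
  -- derivative of φ at 0
  have hwD : HasFDerivAt w (fderiv ℝ u z₀ + ε • gbar' α a b z₀) z₀ :=
    hdiff.hasFDerivAt.add ((gbar_hasFDerivAt α a b z₀).const_mul ε)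
  set D : ℝ := (fderiv ℝ u z₀ + ε • gbar' α a b z₀) v with hDdef
  have hφD : HasDerivAt φ D 0 := by
    have h := hwD
    rw [show z₀ = z₀ + (0 : ℝ) • v by simp] at h
    have h2 := h.comp_hasDerivAt 0 (hline 0)
    simpa [hφdef, hDdef, Function.comp_def] using h2
  have hD : D ≤ 0 := by
    have hsl : Tendsto (slope φ 0) (𝓝[>] 0) (𝓝 D) :=
      (hasDerivAt_iff_tendsto_slope.mp hφD).mono_left
        (nhdsWithin_mono _ fun t ht => ne_of_gt ht)
    have hev : ∀ᶠ t in 𝓝[>] (0 : ℝ), slope φ 0 t ≤ 0 := by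
      filter_upwards [Ioo_mem_nhdsGT (by norm_num : (0:ℝ) < 1/4)] with t ht
      rw [slope_def_field]
      apply div_nonpos_of_nonpos_of_nonneg
      · linarith [hφle t ht]
      · linarith [ht.1]
    exact le_of_tendsto hsl hev
  -- compute D
  have hre : z₀.re - a = -(2⁻¹) * v.re := by
    have h := congrArg Complex.re hvc
    rw [Complex.sub_re, Complex.smul_re] at h
    simpa using h
  have him : z₀.im - b = -(2⁻¹) * v.im := by
    have h := congrArg Complex.im hvc
    rw [Complex.sub_im, Complex.smul_im] at h
    simpa using h
  have hg'val : gbar' α a b z₀ v = E₀ * α * r ^ 2 := by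
    rw [gbar']
    simp only [ContinuousLinearMap.smul_apply, ContinuousLinearMap.add_apply,
      Complex.reCLM_apply, Complex.imCLM_apply, smul_eq_mul]
    rw [hre, him, hgval z₀, hdistz₀]
    linear_combination Real.exp (-α * ρ ^ 2) * α * hvsq
  have hDval : D = fderiv ℝ u z₀ v + ε * (E₀ * α * r ^ 2) := by
    rw [hDdef]
    simp only [ContinuousLinearMap.add_apply, ContinuousLinearMap.smul_apply,
      smul_eq_mul]
    rw [hg'val]
  have hfinal : fderiv ℝ u z₀ (c - z₀) < 0 := by
    rw [← hvdef]
    have hpos : 0 < ε * (E₀ * α * r ^ 2) := by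
      have : 0 < E₀ := Real.exp_pos _
      positivity
    rw [hDval] at hD
    linarith
  refine ⟨hfinal, fun h0 => ?_⟩
  rw [h0] at hfinal
  simp at hfinal
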